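/- arXiv:2101.09770 — 3 statements merged into one kernel-verified Lean document; each statement's English description precedes it below -/
import Mathlib

section
/- Let G be a finite group and f, g : G → ℂ. For k ≥ 1, define ⟨f,g⟩_k = Σ_{s ∈ G^k, t ∈ G} Σ_x f_s(x) · conj(g_s(xt)), where for s = (s₁,…,s_k), f_s(x) = Π_{ε ∈ {0,1}^k} C^{ε₁+⋯+ε_k} f(x s₁^{ε₁}⋯s_k^{ε_k}) and C denotes complex conjugation. Then ⟨f,g⟩_k is a nonnegative real number. -/
open Finset
open scoped Pointwise

variable {G : Type*} [Group G] [Fintype G] [DecidableEq G]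

/-- The ordered product `s₁^{ε₁} ⋯ s_k^{ε_k}`. -/
def epsProd {G : Type*} [Group G] {k : ℕ} (s : Fin k → G) (ε : Fin k → Bool) : G :=
  (List.ofFn fun i => if ε i then s i else 1).prod

/-- The non-normalized Gowers `U^k`-norm of (the indicator function of) `A`:
`‖A‖_{U^k} = ∑_{x₀,x₁,…,x_k ∈ G} ∏_{ε ∈ {0,1}^k} 1_A(x₀ x₁^{ε₁}⋯x_k^{ε_k})`. -/
def gowers {G : Type*} [Group G] [Fintype G] [DecidableEq G] (k : ℕ) (A : Finset G) : ℕ :=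
  ∑ x₀ : G, ∑ x : Fin k → G, ∏ ε : Fin k → Bool, (if x₀ * epsProd x ε ∈ A then 1 else 0)

/-- The fiber set `A_s = {x : x s₁^{ε₁}⋯s_k^{ε_k} ∈ A for all ε ∈ {0,1}^k}`. -/
def subFiber {G : Type*} [Group G] [Fintype G] [DecidableEq G] {k : ℕ} (A : Finset G)
    (s : Fin k → G) : Finset G :=
  Finset.univ.filter fun x => ∀ ε : Fin k → Bool, x * epsProd s ε ∈ A

/-- `f_s(x) = ∏_{ε ∈ {0,1}^k} C^{ε₁+⋯+ε_k} f(x s₁^{ε₁}⋯s_k^{ε_k})`, where `C` is complex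
conjugation. -/
noncomputable def twist {G : Type*} [Group G] (f : G → ℂ) {k : ℕ} (s : Fin k → G) (x : G) : ℂ :=
  ∏ ε : Fin k → Bool,
    if (Finset.univ.filter fun i => ε i = true).card % 2 = 0 then f (x * epsProd s ε)
    else (starRingEnd ℂ) (f (x * epsProd s ε))

/-- `⟨f,g⟩_k = ∑_{s ∈ G^k, t ∈ G} ∑_x f_s(x) · conj(g_s(xt))`. -/
noncomputable def scalarK {G : Type*} [Group G] [Fintype G] (k : ℕ) (f g : G → ℂ) : ℂ :=
  ∑ s : Fin k → G, ∑ t : G, ∑ x : G, twist f s x * (starRingEnd ℂ) (twist g s (x * t))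

set_option linter.unusedSectionVars false

lemma epsProd_cons {n : ℕ} (a : G) (s : Fin n → G) (b : Bool) (ε : Fin n → Bool) :
    epsProd (Fin.cons a s) (Fin.cons b ε) = (if b then a else 1) * epsProd s ε := by
  unfold epsProd
  rw [List.ofFn_succ]
  simp [Fin.cons_zero, Fin.cons_succ]

lemma card_filter_cons {n : ℕ} (b : Bool) (ε : Fin n → Bool) :
    (Finset.univ.filter fun i => (Fin.cons b ε : Fin (n+1) → Bool) i = true).card
      = (if b then 1 else 0) + (Finset.univ.filter fun i => ε i = true).card := by
  rw [Finset.card_filter, Finset.card_filter, Fin.sum_univ_succ]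
  simp [Fin.cons_succ, Fin.cons_zero]

lemma twist_cons (f : G → ℂ) {n : ℕ} (a : G) (s : Fin n → G) (x : G) :
    twist f (Fin.cons a s) x = twist f s x * (starRingEnd ℂ) (twist f s (x * a)) := by
  unfold twist
  rw [map_prod, ← Equiv.prod_comp (Fin.consEquiv fun _ => Bool),
    Fintype.prod_prod_type, Fintype.prod_bool]
  conv_lhs => rw [mul_comm]
  congr 1
  · refine Finset.prod_congr rfl fun ε _ => ?_
    rw [show ((Fin.consEquiv fun _ => Bool) (false, ε)) = Fin.cons false ε from rfl]
    rw [card_filter_cons, epsProd_cons]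
    simp
  · refine Finset.prod_congr rfl fun ε _ => ?_
    rw [show ((Fin.consEquiv fun _ => Bool) (true, ε)) = Fin.cons true ε from rfl]
    rw [card_filter_cons, epsProd_cons]
    rcases Nat.even_or_odd ((Finset.univ.filter fun i => ε i = true).card) with h | h
    · have h0 : (Finset.univ.filter fun i => ε i = true).card % 2 = 0 := Nat.even_iff.1 h
      have h1 : (1 + (Finset.univ.filter fun i => ε i = true).card) % 2 = 1 := by omega
      simp [h0, h1, mul_assoc]
    · have h0 : (Finset.univ.filter fun i => ε i = true).card % 2 = 1 := Nat.odd_iff.1 h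
      have h1 : (1 + (Finset.univ.filter fun i => ε i = true).card) % 2 = 0 := by omega
      simp [h0, h1, mul_assoc]

/-- The reindexing `(a,x,y) ↦ (y x⁻¹, x a, x)`. -/
def tripleEquiv (G : Type*) [Group G] : G × G × G ≃ G × G × G where
  toFun p := (p.2.2 * p.2.1⁻¹, p.2.1 * p.1, p.2.1)
  invFun q := (q.2.2⁻¹ * q.2.1, q.2.2, q.1 * q.2.2)
  left_inv := by rintro ⟨a, x, y⟩; simp [mul_assoc]
  right_inv := by rintro ⟨w, u, v⟩; simp [mul_assoc]

lemma key (A B : G → ℂ) :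
    (∑ a : G, (∑ x : G, A x * (starRingEnd ℂ) (A (x * a))) *
        (starRingEnd ℂ) (∑ y : G, B y * (starRingEnd ℂ) (B (y * a))))
      = ∑ w : G, (∑ u : G, (starRingEnd ℂ) (A u) * B (w * u)) *
          (starRingEnd ℂ) (∑ v : G, (starRingEnd ℂ) (A v) * B (w * v)) := by
  have L : (∑ a : G, (∑ x : G, A x * (starRingEnd ℂ) (A (x * a))) *
        (starRingEnd ℂ) (∑ y : G, B y * (starRingEnd ℂ) (B (y * a))))
      = ∑ p : G × G × G, (A p.2.1 * (starRingEnd ℂ) (A (p.2.1 * p.1))) *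
          ((starRingEnd ℂ) (B p.2.2) * B (p.2.2 * p.1)) := by
    rw [Fintype.sum_prod_type]
    refine Finset.sum_congr rfl fun a _ => ?_
    rw [Fintype.sum_prod_type, map_sum, Finset.sum_mul_sum]
    refine Finset.sum_congr rfl fun x _ => Finset.sum_congr rfl fun y _ => ?_
    simp only [map_mul, Complex.conj_conj]
  have R : (∑ w : G, (∑ u : G, (starRingEnd ℂ) (A u) * B (w * u)) *
          (starRingEnd ℂ) (∑ v : G, (starRingEnd ℂ) (A v) * B (w * v)))
      = ∑ q : G × G × G, ((starRingEnd ℂ) (A q.2.1) * B (q.1 * q.2.1)) *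
          (A q.2.2 * (starRingEnd ℂ) (B (q.1 * q.2.2))) := by
    rw [Fintype.sum_prod_type]
    refine Finset.sum_congr rfl fun w _ => ?_
    rw [Fintype.sum_prod_type, map_sum, Finset.sum_mul_sum]
    refine Finset.sum_congr rfl fun u _ => Finset.sum_congr rfl fun v _ => ?_
    simp only [map_mul, Complex.conj_conj]
  rw [L, R]
  refine Fintype.sum_equiv (tripleEquiv G) _ _ fun p => ?_
  obtain ⟨a, x, y⟩ := p
  simp only [tripleEquiv, Equiv.coe_fn_mk]
  have h1 : y * x⁻¹ * (x * a) = y * a := by group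
  have h2 : y * x⁻¹ * x = y := by group
  rw [h1, h2]
  ring


open scoped ComplexOrder in
/-- for `k ≥ 1` and any `f, g : G → ℂ`, the quantity `⟨f,g⟩_k` is a
nonnegative real number. -/
theorem stmt9 (f g : G → ℂ) (k : ℕ) (hk : 1 ≤ k) :
    0 ≤ scalarK k f g := by
  obtain ⟨n, rfl⟩ : ∃ n, k = n + 1 := ⟨k - 1, (Nat.succ_pred_eq_of_pos hk).symm⟩
  unfold scalarK
  have h1 : ∀ s : Fin (n + 1) → G,
      (∑ t : G, ∑ x : G, twist f s x * (starRingEnd ℂ) (twist g s (x * t)))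
        = (∑ x : G, twist f s x) * (starRingEnd ℂ) (∑ y : G, twist g s y) := by
    intro s
    rw [Finset.sum_comm]
    calc ∑ x : G, ∑ t : G, twist f s x * (starRingEnd ℂ) (twist g s (x * t))
        = ∑ x : G, twist f s x * ∑ t : G, (starRingEnd ℂ) (twist g s (x * t)) := by
          simp [Finset.mul_sum]
      _ = ∑ x : G, twist f s x * (starRingEnd ℂ) (∑ y : G, twist g s y) := by
          refine Finset.sum_congr rfl fun x _ => ?_
          congr 1
          rw [map_sum]
          exact Equiv.sum_comp (Equiv.mulLeft x) fun y => (starRingEnd ℂ) (twist g s y)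
      _ = _ := by rw [← Finset.sum_mul]
  simp_rw [h1]
  rw [← Equiv.sum_comp (Fin.consEquiv fun _ => G), Fintype.sum_prod_type, Finset.sum_comm]
  refine Finset.sum_nonneg fun s' _ => ?_
  have : ∀ a : G, (Fin.consEquiv fun _ => G) ((a, s') : G × (Fin n → G)) = Fin.cons a s' :=
    fun a => rfl
  calc (0 : ℂ)
      ≤ ∑ w : G, (∑ u : G, (starRingEnd ℂ) (twist f s' u) * twist g s' (w * u)) *
          (starRingEnd ℂ) (∑ v : G, (starRingEnd ℂ) (twist f s' v) * twist g s' (w * v)) := by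
        refine Finset.sum_nonneg fun w _ => ?_
        rw [Complex.mul_conj]
        exact Complex.zero_le_real.2 (Complex.normSq_nonneg _)
    _ = _ := by
        rw [← key (twist f s') (twist g s')]
        refine (Finset.sum_congr rfl fun a _ => ?_).symm
        rw [this a]
        congr 1
        · exact Finset.sum_congr rfl fun x _ => by rw [twist_cons]
        · congr 1
          exact Finset.sum_congr rfl fun y _ => by rw [twist_cons]
end

section
/- Let G be a finite group, A ⊆ G with |A| = δ|G|, ε ∈ (0,1], and suppose that for every nontrivial irreducible unitary representation ρ of G the operator norm of the Fourier transform satisfies ‖Σ_{a∈A} ρ(a)‖_op ≤ ε|A|. Then for any subsets H, H* ⊆ G with 1 ∈ H* and |HH*| ≤ |H| + K|H*|, one has | |A ∩ H| − |A||H|/|G| | ≤ 2K|H*| + ε|A|·√(|H|/|H*| + K). -/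
open Finset
open scoped Pointwise

namespace Stmt16Aux

set_option linter.unusedSectionVars false
variable {G : Type*} [Group G] [Fintype G] [DecidableEq G]

noncomputable def Lg (g : G) : EuclideanSpace ℂ G ≃ₗᵢ[ℂ] EuclideanSpace ℂ G :=
  LinearIsometryEquiv.piLpCongrLeft 2 ℂ ℂ (Equiv.mulLeft g)

lemma Lg_apply (g : G) (v : EuclideanSpace ℂ G) (y : G) : Lg g v y = v (g⁻¹ * y) := by
  simp [Lg, LinearIsometryEquiv.piLpCongrLeft_apply, Equiv.piCongrLeft'_apply]

noncomputable def sumF : EuclideanSpace ℂ G →ₗ[ℂ] ℂ where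
  toFun f := ∑ y, f y
  map_add' f g := by simp [Finset.sum_add_distrib]
  map_smul' c f := by simp [Finset.mul_sum]

noncomputable def V (G : Type*) [Group G] [Fintype G] : Submodule ℂ (EuclideanSpace ℂ G) :=
  LinearMap.ker sumF

lemma mem_V {v : EuclideanSpace ℂ G} : v ∈ V G ↔ ∑ y, v y = 0 := Iff.rfl

lemma sum_Lg (g : G) (v : EuclideanSpace ℂ G) : ∑ y, Lg g v y = ∑ y, v y := by
  simp only [Lg_apply]
  exact Fintype.sum_equiv (Equiv.mulLeft g⁻¹) _ _ (fun y => congrArg v (by simp))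

lemma Lg_mem (g : G) {v : EuclideanSpace ℂ G} (hv : v ∈ V G) : Lg g v ∈ V G := by
  rw [mem_V, sum_Lg]; exact hv

noncomputable def LgV (g : G) : V G →ₗ[ℂ] V G :=
  (Lg g).toLinearEquiv.toLinearMap.restrict (fun _ hv => Lg_mem g hv)

@[simp] lemma LgV_coe (g : G) (v : V G) : (LgV g v : EuclideanSpace ℂ G) = Lg g (v : EuclideanSpace ℂ G) := rfl

lemma Lg_Lg (g h : G) (v : EuclideanSpace ℂ G) : Lg g (Lg h v) = Lg (g * h) v := by
  ext y; rw [Lg_apply, Lg_apply, Lg_apply]; exact congrArg v (by simp [mul_assoc])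

@[simp] lemma Lg_one (v : EuclideanSpace ℂ G) : Lg (1 : G) v = v := by
  ext y; rw [Lg_apply]; exact congrArg v (by simp)

noncomputable def LgVe (g : G) : V G ≃ₗᵢ[ℂ] V G where
  toLinearEquiv := LinearEquiv.ofLinear (LgV g) (LgV g⁻¹)
    (by ext v; simp [Lg_Lg])
    (by ext v; simp [Lg_Lg])
  norm_map' v := by
    show ‖(LgV g v : EuclideanSpace ℂ G)‖ = ‖(v : EuclideanSpace ℂ G)‖
    simp only [LgV_coe]
    exact (Lg g).norm_map _

@[simp] lemma LgVe_coe (g : G) (v : V G) :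
    ((LgVe g v : V G) : EuclideanSpace ℂ G) = Lg g (v : EuclideanSpace ℂ G) := rfl

noncomputable def rho0 (G : Type*) [Group G] [Fintype G] [DecidableEq G] : G →* (V G ≃ₗᵢ[ℂ] V G) :=
  MonoidHom.mk' LgVe (by
    intro a b
    apply LinearIsometryEquiv.ext
    intro v
    apply Subtype.ext
    show (((LgVe (a*b)) v : V G) : EuclideanSpace ℂ G) = _
    rw [LgVe_coe]
    have : ((LgVe a * LgVe b) v : EuclideanSpace ℂ G) = Lg a (Lg b (v : EuclideanSpace ℂ G)) := rfl
    rw [this, Lg_Lg])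

@[simp] lemma rho0_coe (g : G) (v : V G) :
    ((rho0 G g v : V G) : EuclideanSpace ℂ G) = Lg g (v : EuclideanSpace ℂ G) := rfl

noncomputable def dV (G : Type*) [Group G] [Fintype G] [DecidableEq G] : ℕ := Module.finrank ℂ (V G)

noncomputable def B (G : Type*) [Group G] [Fintype G] [DecidableEq G] :
    V G ≃ₗᵢ[ℂ] EuclideanSpace ℂ (Fin (dV G)) :=
  (stdOrthonormalBasis ℂ (V G)).repr

noncomputable def conjB (G : Type*) [Group G] [Fintype G] [DecidableEq G] :
    (V G ≃ₗᵢ[ℂ] V G) →* (EuclideanSpace ℂ (Fin (dV G)) ≃ₗᵢ[ℂ] EuclideanSpace ℂ (Fin (dV G))) :=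
  MonoidHom.mk' (fun e => ((B G).symm.trans e).trans (B G)) (by
    intro a b
    apply LinearIsometryEquiv.ext
    intro x
    show (B G) ((a * b) ((B G).symm x)) = _
    rw [LinearIsometryEquiv.mul_def, LinearIsometryEquiv.mul_def]
    simp [LinearIsometryEquiv.trans_apply])

noncomputable def rho (G : Type*) [Group G] [Fintype G] [DecidableEq G] :
    G →* unitary (EuclideanSpace ℂ (Fin (dV G)) →L[ℂ] EuclideanSpace ℂ (Fin (dV G))) :=
  (Unitary.linearIsometryEquiv.symm : (EuclideanSpace ℂ (Fin (dV G)) ≃ₗᵢ[ℂ] _) ≃* _).toMonoidHom.comp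
    ((conjB G).comp (rho0 G))

lemma rho_apply (g : G) (x : EuclideanSpace ℂ (Fin (dV G))) :
    (rho G g : EuclideanSpace ℂ (Fin (dV G)) →L[ℂ] EuclideanSpace ℂ (Fin (dV G))) x
      = B G (rho0 G g ((B G).symm x)) := rfl

set_option maxHeartbeats 1000000 in
lemma key (A : Finset G) (ε : ℝ)
    (hA : ∀ (d : ℕ)
      (ρ : G →* unitary (EuclideanSpace ℂ (Fin d) →L[ℂ] EuclideanSpace ℂ (Fin d))),
      (∀ v : EuclideanSpace ℂ (Fin d),
        (∀ g : G, (ρ g : EuclideanSpace ℂ (Fin d) →L[ℂ] EuclideanSpace ℂ (Fin d)) v = v) →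
          v = 0) →
      ‖∑ a ∈ A, (ρ a : EuclideanSpace ℂ (Fin d) →L[ℂ] EuclideanSpace ℂ (Fin d))‖ ≤
        ε * A.card)
    (x : EuclideanSpace ℂ G) (hx : ∑ y, x y = 0) :
    ‖∑ a ∈ A, (Lg a x : EuclideanSpace ℂ G)‖ ≤ ε * A.card * ‖x‖ := by
  have hinv : ∀ v : EuclideanSpace ℂ (Fin (dV G)),
      (∀ g : G, (rho G g : EuclideanSpace ℂ (Fin (dV G)) →L[ℂ] EuclideanSpace ℂ (Fin (dV G))) v = v) → v = 0 := by
    intro v hv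
    set xv : V G := (B G).symm v with hxv
    have hfix : ∀ g : G, Lg g (xv : EuclideanSpace ℂ G) = (xv : EuclideanSpace ℂ G) := by
      intro g
      have h1 : B G (rho0 G g xv) = v := hv g
      have h2 : rho0 G g xv = xv := by
        have := congrArg (B G).symm h1
        rwa [LinearIsometryEquiv.symm_apply_apply] at this
      rw [← rho0_coe]
      exact congrArg Subtype.val h2
    have hconst : ∀ g : G, (xv : EuclideanSpace ℂ G) g = (xv : EuclideanSpace ℂ G) 1 := by
      intro g
      have h3 := congrFun (congrArg (fun (f : EuclideanSpace ℂ G) => (f : G → ℂ)) (hfix g)) g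
      have h4 : Lg g (xv : EuclideanSpace ℂ G) g = (xv : EuclideanSpace ℂ G) 1 := by
        rw [Lg_apply]
        exact congrArg (xv : EuclideanSpace ℂ G) (inv_mul_cancel g)
      exact (h3.symm.trans h4)
    have hsum : ∑ y : G, (xv : EuclideanSpace ℂ G) y = 0 := xv.2
    have hzero : (xv : EuclideanSpace ℂ G) 1 = 0 := by
      have heq : ∑ y : G, (xv : EuclideanSpace ℂ G) y
          = (Fintype.card G : ℂ) * (xv : EuclideanSpace ℂ G) 1 := by
        rw [Finset.sum_congr rfl (fun y _ => hconst y)]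
        simp [Finset.card_univ, mul_comm]
      rw [heq] at hsum
      have hcard : (Fintype.card G : ℂ) ≠ 0 :=
        Nat.cast_ne_zero.mpr Fintype.card_ne_zero
      exact (mul_eq_zero.mp hsum).resolve_left hcard
    have hx0 : xv = 0 := by
      apply Subtype.ext
      ext y
      simpa [hzero] using hconst y
    have hv2 : v = B G xv := ((B G).apply_symm_apply v).symm
    rw [hv2, hx0, map_zero]
  have hnorm := hA (dV G) (rho G) hinv
  set xv : V G := ⟨x, hx⟩ with hxv
  set s : V G := ∑ a ∈ A, rho0 G a xv with hs
  have hcoe : (s : EuclideanSpace ℂ G) = ∑ a ∈ A, (Lg a x : EuclideanSpace ℂ G) := by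
    rw [hs, AddSubmonoidClass.coe_finset_sum]
    exact Finset.sum_congr rfl (fun a _ => rho0_coe a xv)
  have happ : (∑ a ∈ A, (rho G a : EuclideanSpace ℂ (Fin (dV G)) →L[ℂ] EuclideanSpace ℂ (Fin (dV G)))) (B G xv)
      = B G s := by
    rw [ContinuousLinearMap.sum_apply, hs, map_sum]
    exact Finset.sum_congr rfl (fun a _ => by
      rw [rho_apply, LinearIsometryEquiv.symm_apply_apply])
  have e0 : ‖∑ a ∈ A, (Lg a x : EuclideanSpace ℂ G)‖ = ‖B G s‖ := by
    rw [← hcoe, Submodule.norm_coe, (B G).norm_map]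
  have e1 : ‖B G s‖ ≤ ε * A.card * ‖B G xv‖ := by
    rw [← happ]
    calc ‖(∑ a ∈ A, (rho G a : EuclideanSpace ℂ (Fin (dV G)) →L[ℂ] EuclideanSpace ℂ (Fin (dV G)))) (B G xv)‖
        ≤ ‖∑ a ∈ A, (rho G a : EuclideanSpace ℂ (Fin (dV G)) →L[ℂ] EuclideanSpace ℂ (Fin (dV G)))‖ * ‖B G xv‖ :=
          ContinuousLinearMap.le_opNorm _ _
      _ ≤ ε * A.card * ‖B G xv‖ :=
          mul_le_mul_of_nonneg_right hnorm (norm_nonneg _)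
  have e2 : ‖B G xv‖ = ‖x‖ := by
    rw [(B G).norm_map, hxv, Submodule.coe_norm]
  rw [e0]
  rw [e2] at e1
  exact e1

lemma sum_apply' {ι : Type*} (s : Finset ι) (f : ι → EuclideanSpace ℂ G) (y : G) :
    (∑ a ∈ s, f a) y = ∑ a ∈ s, f a y := by
  classical
  induction s using Finset.induction with
  | empty => rfl
  | insert _ _ h ih => rw [Finset.sum_insert h, Finset.sum_insert h, ← ih]; rfl

end Stmt16Aux

open Stmt16Aux in
set_option maxHeartbeats 1000000 in
/-- the non-commutative Weyl-type uniform distribution statement.  If the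
Fourier transform of `A` at every nontrivial irreducible unitary representation (equivalently,
at every unitary representation containing no invariant vectors) has operator norm at most
`ε|A|`, then for all `H, H* ⊆ G` with `1 ∈ H*` and `|HH*| ≤ |H| + K|H*|`,
`| |A ∩ H| − |A||H|/|G| | ≤ 2K|H*| + ε|A|√(|H|/|H*| + K)`. -/
theorem stmt16 {G : Type*} [Group G] [Fintype G] [DecidableEq G]
    (A : Finset G) (ε : ℝ) (hε : 0 < ε) (hε1 : ε ≤ 1) (K : ℝ) (hK : 0 ≤ K)
    (hA : ∀ (d : ℕ)
      (ρ : G →* unitary (EuclideanSpace ℂ (Fin d) →L[ℂ] EuclideanSpace ℂ (Fin d))),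
      (∀ v : EuclideanSpace ℂ (Fin d),
        (∀ g : G, (ρ g : EuclideanSpace ℂ (Fin d) →L[ℂ] EuclideanSpace ℂ (Fin d)) v = v) →
          v = 0) →
      ‖∑ a ∈ A, (ρ a : EuclideanSpace ℂ (Fin d) →L[ℂ] EuclideanSpace ℂ (Fin d))‖ ≤
        ε * A.card)
    (H Hs : Finset G) (h1 : (1 : G) ∈ Hs)
    (hHH : ((H * Hs).card : ℝ) ≤ H.card + K * Hs.card) :
    |((A ∩ H).card : ℝ) - (A.card : ℝ) * H.card / Fintype.card G| ≤
      2 * K * Hs.card + ε * A.card * Real.sqrt ((H.card : ℝ) / Hs.card + K) := by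
  classical
  set n : ℝ := (Fintype.card G : ℝ) with hn
  have hn0 : 0 < n := by
    have : 0 < Fintype.card G := Fintype.card_pos
    rw [hn]; exact_mod_cast this
  set m : ℝ := (Hs.card : ℝ) with hm
  have hm1 : 1 ≤ m := by
    have : 1 ≤ Hs.card := Finset.card_pos.mpr ⟨1, h1⟩
    rw [hm]; exact_mod_cast this
  have hm0 : 0 < m := lt_of_lt_of_le one_pos hm1
  set δ : ℝ := (H.card : ℝ) / n with hδ
  have hδ0 : 0 ≤ δ := by positivity
  -- real profile functions
  set uf : G → ℝ := fun y => (if y ∈ H then (1:ℝ) else 0) - δ with huf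
  set wf : G → ℝ := fun y => (if y⁻¹ ∈ Hs then m⁻¹ else 0) - n⁻¹ with hwf
  set u : EuclideanSpace ℂ G := WithLp.toLp 2 (fun y => ((uf y : ℝ) : ℂ)) with hu
  set w0 : EuclideanSpace ℂ G := WithLp.toLp 2 (fun y => ((wf y : ℝ) : ℂ)) with hw0
  -- generic counting lemma
  have hgen : ∀ (e : G ≃ G), ((univ.filter fun y : G => e y ∈ Hs)).card = Hs.card := by
    intro e
    apply Finset.card_bij (fun y _ => e y)
    · intro a ha; exact (Finset.mem_filter.mp ha).2
    · intro a _ b _ hab; exact e.injective hab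
    · intro b hb
      exact ⟨e.symm b, Finset.mem_filter.mpr ⟨Finset.mem_univ _, by simp [hb]⟩, by simp⟩
  have hcnt1 : ∀ x : G, ((univ.filter fun y : G => y⁻¹ * x ∈ Hs)).card = Hs.card := by
    intro x
    have := hgen ((Equiv.inv G).trans (Equiv.mulRight x))
    convert this using 2
    ext z; simp
  have hcnt2 : ∀ y : G, ((univ.filter fun x : G => y⁻¹ * x ∈ Hs)).card = Hs.card := by
    intro y
    have := hgen (Equiv.mulLeft y⁻¹)
    convert this using 2
    ext z; rw [Finset.mem_filter, Finset.mem_filter]; simp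
  have hcnt3 : ((univ.filter fun y : G => y⁻¹ ∈ Hs)).card = Hs.card := by
    have := hgen (Equiv.inv G)
    convert this using 2
    ext z; simp
  -- sums of indicators
  have hsumH : ∑ y : G, (if y ∈ H then (1:ℝ) else 0) = (H.card : ℝ) := by
    rw [Finset.sum_boole]
    simp
  have hsumS : ∀ x : G, ∑ y : G, (if y⁻¹ * x ∈ Hs then (1:ℝ) else 0) = m := by
    intro x
    rw [Finset.sum_boole, hm]
    exact_mod_cast congrArg Nat.cast (hcnt1 x)
  have hsumS3 : ∑ y : G, (if y⁻¹ ∈ Hs then (1:ℝ) else 0) = m := by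
    rw [Finset.sum_boole, hm]
    exact_mod_cast congrArg Nat.cast hcnt3
  have hδn : δ * n = (H.card : ℝ) := by
    rw [hδ]; field_simp
  -- mean zero
  have hu0 : ∑ y : G, uf y = 0 := by
    rw [huf]
    rw [Finset.sum_sub_distrib, hsumH, Finset.sum_const, Finset.card_univ, nsmul_eq_mul, ← hn]
    rw [← hδn]; ring
  have hw00 : ∑ y : G, wf y = 0 := by
    rw [hwf]
    have h1' : ∑ y : G, (if y⁻¹ ∈ Hs then m⁻¹ else 0) = 1 := by
      have : ∀ y : G, (if y⁻¹ ∈ Hs then m⁻¹ else 0) = m⁻¹ * (if y⁻¹ ∈ Hs then (1:ℝ) else 0) := by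
        intro y; by_cases h : y⁻¹ ∈ Hs <;> simp [h]
      rw [Finset.sum_congr rfl fun y _ => this y, ← Finset.mul_sum, hsumS3]
      field_simp
    rw [Finset.sum_sub_distrib, h1', Finset.sum_const, Finset.card_univ, nsmul_eq_mul, ← hn]
    field_simp; ring
  have huV : ∑ y : G, u y = 0 := by
    rw [hu]
    have : ∑ y : G, ((uf y : ℝ) : ℂ) = ((∑ y : G, uf y : ℝ) : ℂ) := by push_cast; rfl
    rw [this, hu0]; simp
  have hw0V : ∑ y : G, w0 y = 0 := by
    rw [hw0]
    have : ∑ y : G, ((wf y : ℝ) : ℂ) = ((∑ y : G, wf y : ℝ) : ℂ) := by push_cast; rfl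
    rw [this, hw00]; simp
  -- norm bounds
  have hnormu : ‖u‖ ≤ Real.sqrt (H.card : ℝ) := by
    rw [EuclideanSpace.norm_eq]
    apply Real.sqrt_le_sqrt
    have hterm : ∀ y : G, ‖u y‖ ^ 2 = (if y ∈ H then (1:ℝ) else 0) * (1 - 2*δ) + δ^2 := by
      intro y
      have h0 : ‖u y‖ = |uf y| := by rw [hu]; exact RCLike.norm_ofReal _
      rw [h0, sq_abs, huf]
      by_cases h : y ∈ H <;> simp [h] <;> ring
    rw [Finset.sum_congr rfl fun y _ => hterm y]
    rw [Finset.sum_add_distrib, ← Finset.sum_mul, hsumH, Finset.sum_const,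
      Finset.card_univ, nsmul_eq_mul, ← hn]
    have : n * δ^2 = (H.card : ℝ) * δ := by rw [← hδn]; ring
    nlinarith [hδ0, mul_nonneg (Nat.cast_nonneg H.card : (0:ℝ) ≤ H.card) hδ0]
  have hnormw : ‖w0‖ ≤ Real.sqrt m⁻¹ := by
    rw [EuclideanSpace.norm_eq]
    apply Real.sqrt_le_sqrt
    have hterm : ∀ y : G, ‖w0 y‖ ^ 2
        = (if y⁻¹ ∈ Hs then (1:ℝ) else 0) * (m⁻¹^2 - 2*m⁻¹*n⁻¹) + n⁻¹^2 := by
      intro y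
      have h0 : ‖w0 y‖ = |wf y| := by rw [hw0]; exact RCLike.norm_ofReal _
      rw [h0, sq_abs, hwf]
      by_cases h : y⁻¹ ∈ Hs <;> simp [h] <;> ring
    rw [Finset.sum_congr rfl fun y _ => hterm y]
    rw [Finset.sum_add_distrib, ← Finset.sum_mul, hsumS3, Finset.sum_const,
      Finset.card_univ, nsmul_eq_mul, ← hn]
    have e1 : m * (m⁻¹^2 - 2*m⁻¹*n⁻¹) = m⁻¹ - 2*n⁻¹ := by field_simp
    have e2 : n * n⁻¹^2 = n⁻¹ := by field_simp
    rw [e1, e2]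
    have : (0:ℝ) ≤ n⁻¹ := by positivity
    linarith
  have happly : ∀ (f : G → EuclideanSpace ℂ G) (y : G),
      (∑ a ∈ A, f a) y = ∑ a ∈ A, f a y :=
    fun f y => Stmt16Aux.sum_apply' A f y
  -- the smoothed operator bound
  set z : EuclideanSpace ℂ G := ∑ a ∈ A, Lg a w0 with hz
  have hznorm : ‖z‖ ≤ ε * A.card * Real.sqrt m⁻¹ := by
    calc ‖z‖ ≤ ε * A.card * ‖w0‖ := Stmt16Aux.key A ε hA w0 hw0V
      _ ≤ ε * A.card * Real.sqrt m⁻¹ := by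
          apply mul_le_mul_of_nonneg_left hnormw
          positivity
  -- inner product computations
  set T : ℝ := ∑ a ∈ A, ∑ y : G, uf y * wf (a⁻¹ * y) with hT
  have hSval : (inner ℂ u z : ℂ) = (T : ℂ) := by
    rw [PiLp.inner_apply]
    simp only [RCLike.inner_apply]
    have hzy : ∀ y : G, z y = ((∑ a ∈ A, wf (a⁻¹ * y) : ℝ) : ℂ) := by
      intro y
      rw [hz, happly]
      push_cast
      exact Finset.sum_congr rfl fun a _ => by rw [Lg_apply, hw0]
    have huy : ∀ y : G, (starRingEnd ℂ) (u y) = ((uf y : ℝ) : ℂ) := by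
      intro y
      rw [hu]
      exact Complex.conj_ofReal _
    rw [Finset.sum_congr rfl fun y _ => by rw [huy y, hzy y]]
    rw [hT]
    push_cast
    rw [Finset.sum_comm]
    exact Finset.sum_congr rfl fun y _ => by
      rw [Finset.sum_mul]; exact Finset.sum_congr rfl fun a _ => mul_comm _ _
  have hTabs : |T| ≤ ε * A.card * (Real.sqrt (H.card : ℝ) * Real.sqrt m⁻¹) := by
    have h1' : ‖(inner ℂ u z : ℂ)‖ ≤ ‖u‖ * ‖z‖ := norm_inner_le_norm u z
    rw [hSval] at h1'
    have h2' : ‖((T : ℝ) : ℂ)‖ = |T| := RCLike.norm_ofReal _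
    rw [h2'] at h1'
    calc |T| ≤ ‖u‖ * ‖z‖ := h1'
      _ ≤ Real.sqrt (H.card : ℝ) * (ε * A.card * Real.sqrt m⁻¹) := by
          apply mul_le_mul hnormu hznorm (norm_nonneg _) (Real.sqrt_nonneg _)
      _ = ε * A.card * (Real.sqrt (H.card : ℝ) * Real.sqrt m⁻¹) := by ring
  -- convolution function
  set c : G → ℝ := fun x => (((H.filter fun y => y⁻¹ * x ∈ Hs)).card : ℝ) with hc
  set gg : G → ℝ := fun x => m⁻¹ * c x with hgg
  have hfilter_eq : ∀ x : G, (univ.filter fun y : G => y ∈ H ∧ y⁻¹ * x ∈ Hs)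
      = H.filter fun y => y⁻¹ * x ∈ Hs := by
    intro x; ext y; simp
  have hTval : T = ∑ a ∈ A, (gg a - δ) := by
    rw [hT]
    apply Finset.sum_congr rfl
    intro a _
    have hterm : ∀ y : G, uf y * wf (a⁻¹ * y)
        = (if y ∈ H ∧ y⁻¹ * a ∈ Hs then m⁻¹ else 0)
          - n⁻¹ * (if y ∈ H then (1:ℝ) else 0)
          - δ * (if y⁻¹ * a ∈ Hs then m⁻¹ else 0) + δ * n⁻¹ := by
      intro y
      simp only [huf, hwf, mul_inv_rev, inv_inv]
      by_cases h1' : y ∈ H <;> by_cases h2' : y⁻¹ * a ∈ Hs <;> simp [h1', h2'] <;> ring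
    rw [Finset.sum_congr rfl fun y _ => hterm y]
    have e1 : ∑ y : G, (if y ∈ H ∧ y⁻¹ * a ∈ Hs then m⁻¹ else 0) = gg a := by
      rw [← Finset.sum_filter, hfilter_eq a, Finset.sum_const, nsmul_eq_mul, hgg, hc]
      ring
    have e2 : ∑ y : G, (if y⁻¹ * a ∈ Hs then m⁻¹ else 0) = 1 := by
      have : ∀ y : G, (if y⁻¹ * a ∈ Hs then m⁻¹ else 0)
          = m⁻¹ * (if y⁻¹ * a ∈ Hs then (1:ℝ) else 0) := by
        intro y; by_cases h : y⁻¹ * a ∈ Hs <;> simp [h]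
      rw [Finset.sum_congr rfl fun y _ => this y, ← Finset.mul_sum, hsumS a]
      field_simp
    rw [Finset.sum_add_distrib, Finset.sum_sub_distrib, Finset.sum_sub_distrib,
      e1, ← Finset.mul_sum, hsumH, ← Finset.mul_sum, e2, Finset.sum_const,
      Finset.card_univ, nsmul_eq_mul, ← hn]
    have e3 : n⁻¹ * (H.card : ℝ) = δ := by rw [hδ]; field_simp
    rw [e3]
    have e4 : n * (δ * n⁻¹) = δ := by field_simp
    rw [e4]; ring
  -- properties of gg
  have hc_le : ∀ x : G, c x ≤ m := by
    intro x
    simp only [hc, hm]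
    have : ((H.filter fun y => y⁻¹ * x ∈ Hs)).card ≤ Hs.card := by
      apply Finset.card_le_card_of_injOn (fun y => y⁻¹ * x)
      · intro y hy; exact (Finset.mem_filter.mp hy).2
      · intro y1 _ y2 _ h
        have : y1⁻¹ = y2⁻¹ := mul_right_cancel h
        simpa using congrArg Inv.inv this
    exact_mod_cast this
  have hc_nonneg : ∀ x : G, 0 ≤ c x := fun x => by rw [hc]; positivity
  have hgg_nonneg : ∀ x : G, 0 ≤ gg x := by
    intro x; rw [hgg]
    exact mul_nonneg (by positivity) (hc_nonneg x)
  have hgg_le_one : ∀ x : G, gg x ≤ 1 := by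
    intro x; rw [hgg]
    rw [← inv_mul_cancel₀ (ne_of_gt hm0)]
    exact mul_le_mul_of_nonneg_left (hc_le x) (by positivity)
  have hgg_supp : ∀ x : G, x ∉ H * Hs → gg x = 0 := by
    intro x hx
    simp only [hgg, hc]
    have : (H.filter fun y => y⁻¹ * x ∈ Hs) = ∅ := by
      apply Finset.filter_eq_empty_iff.mpr
      intro y hy hmem
      exact hx (by
        have : y * (y⁻¹ * x) ∈ H * Hs := Finset.mul_mem_mul hy hmem
        simpa [mul_assoc] using this)
    rw [this]; simp
  have hsumS2 : ∀ y : G, ∑ x : G, (if y⁻¹ * x ∈ Hs then (1:ℝ) else 0) = m := by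
    intro y
    rw [Finset.sum_boole, hm]
    exact_mod_cast congrArg Nat.cast (hcnt2 y)
  have hgg_sum : ∑ x : G, gg x = (H.card : ℝ) := by
    have hcx : ∀ x : G, c x = ∑ y ∈ H, (if y⁻¹ * x ∈ Hs then (1:ℝ) else 0) := by
      intro x; simp only [hc]; rw [Finset.sum_boole]
    have hsc : ∑ x : G, c x = (H.card : ℝ) * m := by
      rw [Finset.sum_congr rfl fun x _ => hcx x, Finset.sum_comm,
        Finset.sum_congr rfl fun y _ => hsumS2 y, Finset.sum_const, nsmul_eq_mul]
    simp only [hgg]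
    rw [← Finset.mul_sum, hsc]
    field_simp
  -- L1 bound
  have hL1 : ∑ x : G, |(if x ∈ H then (1:ℝ) else 0) - gg x| ≤ 2 * K * m := by
    have hsplit : ∑ x : G, |(if x ∈ H then (1:ℝ) else 0) - gg x|
        = ∑ x ∈ univ \ H, gg x + ∑ x ∈ H, (1 - gg x) := by
      rw [← Finset.sum_sdiff (Finset.subset_univ H)]
      congr 1
      · apply Finset.sum_congr rfl
        intro x hx
        have hxH : x ∉ H := (Finset.mem_sdiff.mp hx).2
        rw [if_neg hxH, abs_sub_comm]
        simp [abs_of_nonneg (hgg_nonneg x)]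
      · apply Finset.sum_congr rfl
        intro x hx
        rw [if_pos hx]
        exact abs_of_nonneg (by linarith [hgg_le_one x])
    have hsum_split : ∑ x ∈ univ \ H, gg x + ∑ x ∈ H, gg x = (H.card : ℝ) := by
      rw [Finset.sum_sdiff (Finset.subset_univ H)]
      exact hgg_sum
    have hH_part : ∑ x ∈ H, (1 - gg x) = ∑ x ∈ univ \ H, gg x := by
      rw [Finset.sum_sub_distrib, Finset.sum_const, nsmul_eq_mul, mul_one]
      linarith
    have hout : ∑ x ∈ univ \ H, gg x ≤ K * m := by
      have step1 : ∑ x ∈ univ \ H, gg x ≤ ∑ x ∈ univ \ H, (if x ∈ H * Hs then (1:ℝ) else 0) := by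
        apply Finset.sum_le_sum
        intro x _
        by_cases hx : x ∈ H * Hs
        · rw [if_pos hx]; exact hgg_le_one x
        · rw [if_neg hx, hgg_supp x hx]
      have step2 : ∑ x ∈ univ \ H, (if x ∈ H * Hs then (1:ℝ) else 0)
          = (((H * Hs) \ H).card : ℝ) := by
        rw [Finset.sum_boole]
        congr 1
        apply congrArg
        ext x
        simp [Finset.mem_sdiff, and_comm]
      have hHsub : H ⊆ H * Hs := by
        intro h hh
        have := Finset.mul_mem_mul hh h1
        simpa using this
      have step3 : (((H * Hs) \ H).card : ℝ) = ((H * Hs).card : ℝ) - (H.card : ℝ) := by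
        rw [Finset.card_sdiff_of_subset hHsub]
        have := Finset.card_le_card hHsub
        push_cast [Nat.cast_sub this]
        ring
      calc ∑ x ∈ univ \ H, gg x ≤ (((H * Hs) \ H).card : ℝ) := le_trans step1 (le_of_eq step2)
        _ = ((H * Hs).card : ℝ) - (H.card : ℝ) := step3
        _ ≤ K * m := by rw [hm]; linarith
    rw [hsplit, hH_part]
    linarith
  -- final assembly
  have hinter : ((A ∩ H).card : ℝ) = ∑ a ∈ A, (if a ∈ H then (1:ℝ) else 0) := by
    rw [Finset.sum_boole, Finset.filter_mem_eq_inter]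
  have hdelta : (A.card : ℝ) * (H.card : ℝ) / (Fintype.card G : ℝ) = (A.card : ℝ) * δ := by
    rw [hδ, hn]; ring
  have hid : ((A ∩ H).card : ℝ) - (A.card : ℝ) * (H.card : ℝ) / (Fintype.card G : ℝ)
      = (∑ a ∈ A, ((if a ∈ H then (1:ℝ) else 0) - gg a)) + T := by
    rw [hinter, hdelta, hTval, ← Finset.sum_add_distrib]
    have hcong : ∀ a ∈ A, (if a ∈ H then (1:ℝ) else 0) - gg a + (gg a - δ)
        = (if a ∈ H then (1:ℝ) else 0) - δ := fun a _ => by ring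
    rw [Finset.sum_congr rfl hcong, Finset.sum_sub_distrib, Finset.sum_const, nsmul_eq_mul]
  have habs1 : |∑ a ∈ A, ((if a ∈ H then (1:ℝ) else 0) - gg a)| ≤ 2 * K * m := by
    calc |∑ a ∈ A, ((if a ∈ H then (1:ℝ) else 0) - gg a)|
        ≤ ∑ a ∈ A, |(if a ∈ H then (1:ℝ) else 0) - gg a| := Finset.abs_sum_le_sum_abs _ _
      _ ≤ ∑ x : G, |(if x ∈ H then (1:ℝ) else 0) - gg x| :=
          Finset.sum_le_sum_of_subset_of_nonneg (Finset.subset_univ A)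
            (fun x _ _ => abs_nonneg _)
      _ ≤ 2 * K * m := hL1
  have hsqrt : Real.sqrt (H.card : ℝ) * Real.sqrt m⁻¹
      ≤ Real.sqrt ((H.card : ℝ) / m + K) := by
    rw [← Real.sqrt_mul (Nat.cast_nonneg _)]
    apply Real.sqrt_le_sqrt
    rw [div_eq_mul_inv]
    linarith
  rw [hid]
  calc |(∑ a ∈ A, ((if a ∈ H then (1:ℝ) else 0) - gg a)) + T|
      ≤ |∑ a ∈ A, ((if a ∈ H then (1:ℝ) else 0) - gg a)| + |T| := abs_add_le _ _
    _ ≤ 2 * K * m + ε * A.card * (Real.sqrt (H.card : ℝ) * Real.sqrt m⁻¹) := by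
        exact add_le_add habs1 hTabs
    _ ≤ 2 * K * m + ε * A.card * Real.sqrt ((H.card : ℝ) / m + K) := by
        apply add_le_add_right
        apply mul_le_mul_of_nonneg_left hsqrt
        positivity
    _ = 2 * K * Hs.card + ε * A.card * Real.sqrt ((H.card : ℝ) / Hs.card + K) := by
        rw [hm]
end

section
/- For any δ ∈ (0,1/2] and any unitary representation ρ of a finite group G, there exists δ₁ ∈ [δ, 2δ] such that the Bohr set Bohr(ρ,δ₁) is regular, meaning | |Bohr(ρ,(1+κ)δ₁)| − |Bohr(ρ,δ₁)| | ≤ 100 d_ρ² |κ| · |Bohr(ρ,δ₁)| whenever |κ| ≤ 1/(100 d_ρ²). -/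
set_option maxHeartbeats 1000000
set_option synthInstance.maxHeartbeats 400000

open Set MeasureTheory Metric Filter Topology
open scoped ENNReal

section BohrAux

local notation "𝕍" d => EuclideanSpace ℂ (Fin d) →L[ℂ] EuclideanSpace ℂ (Fin d)

/-- Abstract Vitali-covering selection of a "regular" point for a Stieltjes function. -/
private lemma exists_regular_point (f : StieltjesFunction ℝ) (a u₀ lam D : ℝ)
    (hu₀ : 0 < u₀) (hu₀' : u₀ ≤ Real.log 2 / 2)
    (hD : f (a + Real.log 2 + u₀) - f (a - Real.log 2) ≤ D)
    (hcontr : 5 * D < lam * Real.log 2) :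
    ∃ s, s ∈ Icc a (a + Real.log 2) ∧ ∀ u, u ∈ Ioc (0:ℝ) u₀ →
      f (s + u) - f s ≤ lam * u ∧ f s - f (s - u) ≤ lam * u := by
  have hlog2 : (0:ℝ) < Real.log 2 := Real.log_pos (by norm_num)
  have hD0 : 0 ≤ D := le_trans (sub_nonneg.2 (f.mono (by linarith))) hD
  by_contra hbad
  push_neg at hbad
  have key : ∀ s ∈ Icc a (a + Real.log 2), ∃ c rr : ℝ, 0 < rr ∧ rr ≤ u₀ / 2 ∧
      s ∈ closedBall c rr ∧
      closedBall c rr ⊆ Ioc (a - Real.log 2) (a + Real.log 2 + u₀) ∧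
      ENNReal.ofReal (2 * lam * rr) ≤ f.measure (closedBall c rr) := by
    intro s hs
    obtain ⟨u, ⟨hu0, huu⟩, himp⟩ := hbad s hs
    obtain ⟨hs1, hs2⟩ := hs
    rcases le_or_gt (f (s + u) - f s) (lam * u) with hle | hgt
    · -- then `lam * u < f s - f (s - u)`; use the interval `[s - u, s]`
      have h2 := himp hle
      refine ⟨s - u/2, u/2, by linarith, by linarith, ?_, ?_, ?_⟩
      · rw [Real.closedBall_eq_Icc]
        constructor <;> [skip; skip] <;> linarith
      · rw [Real.closedBall_eq_Icc]
        intro x hx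
        obtain ⟨hx1, hx2⟩ := hx
        exact ⟨by linarith, by linarith⟩
      · have hicc : closedBall (s - u/2) (u/2) = Icc (s - u) s := by
          rw [Real.closedBall_eq_Icc]
          congr 1 <;> ring
        rw [hicc]
        calc ENNReal.ofReal (2 * lam * (u/2)) = ENNReal.ofReal (f s - f (s - u) - (f s - f (s-u) - lam * u)) := by
              congr 1; ring
          _ ≤ ENNReal.ofReal (f s - f (s - u)) := ENNReal.ofReal_le_ofReal (by linarith)
          _ = f.measure (Ioc (s - u) s) := (f.measure_Ioc _ _).symm
          _ ≤ f.measure (Icc (s - u) s) := measure_mono Ioc_subset_Icc_self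
    · -- use the interval `[s, s + u]`
      refine ⟨s + u/2, u/2, by linarith, by linarith, ?_, ?_, ?_⟩
      · rw [Real.closedBall_eq_Icc]
        constructor <;> [skip; skip] <;> linarith
      · rw [Real.closedBall_eq_Icc]
        intro x hx
        obtain ⟨hx1, hx2⟩ := hx
        exact ⟨by linarith, by linarith⟩
      · have hicc : closedBall (s + u/2) (u/2) = Icc s (s + u) := by
          rw [Real.closedBall_eq_Icc]
          congr 1 <;> ring
        rw [hicc]
        calc ENNReal.ofReal (2 * lam * (u/2)) = ENNReal.ofReal (f (s+u) - f s - (f (s+u) - f s - lam * u)) := by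
              congr 1; ring
          _ ≤ ENNReal.ofReal (f (s+u) - f s) := ENNReal.ofReal_le_ofReal (by linarith)
          _ = f.measure (Ioc s (s + u)) := (f.measure_Ioc _ _).symm
          _ ≤ f.measure (Icc s (s + u)) := measure_mono Ioc_subset_Icc_self
  choose! c rr hrpos hrle hmem hsub hmeas using key
  obtain ⟨w, hwt, hdisj, hcov⟩ :=
    Vitali.exists_disjoint_subfamily_covering_enlargement_closedBall
      (Icc a (a + Real.log 2)) c rr (u₀/2) hrle 4 (by norm_num)
  have hcount : w.Countable := by
    apply hdisj.countable_of_nonempty_interior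
    intro i hi
    rw [interior_closedBall _ (hrpos i (hwt hi)).ne']
    exact ⟨c i, mem_ball_self (hrpos i (hwt hi))⟩
  have hcover : Icc a (a + Real.log 2) ⊆ ⋃ b ∈ w, closedBall (c b) (4 * rr b) := by
    intro s hs
    obtain ⟨b, hb, hsb⟩ := hcov s hs
    exact mem_biUnion hb (hsb (hmem s hs))
  -- the sum of the radii
  set σ : ℝ≥0∞ := ∑' (b : w), ENNReal.ofReal (rr b) with hσ
  have h1 : ENNReal.ofReal (Real.log 2) ≤ ENNReal.ofReal 8 * σ := by
    calc ENNReal.ofReal (Real.log 2) = volume (Icc a (a + Real.log 2)) := by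
          rw [Real.volume_Icc]; congr 1; ring
      _ ≤ volume (⋃ b ∈ w, closedBall (c b) (4 * rr b)) := measure_mono hcover
      _ ≤ ∑' (b : w), volume (closedBall (c b) (4 * rr b)) := measure_biUnion_le _ hcount _
      _ = ∑' (b : w), ENNReal.ofReal 8 * ENNReal.ofReal (rr b) := by
          apply tsum_congr
          intro b
          rw [Real.volume_closedBall, ← ENNReal.ofReal_mul (by norm_num)]
          congr 1; ring
      _ = ENNReal.ofReal 8 * σ := ENNReal.tsum_mul_left
  have h2 : ENNReal.ofReal (2 * lam) * σ ≤ ENNReal.ofReal D := by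
    have hlam0 : 0 ≤ lam := by nlinarith
    calc ENNReal.ofReal (2 * lam) * σ
        = ∑' (b : w), ENNReal.ofReal (2 * lam * rr b) := by
          rw [hσ, ← ENNReal.tsum_mul_left]
          apply tsum_congr
          intro b
          rw [← ENNReal.ofReal_mul (by positivity)]
      _ ≤ ∑' (b : w), f.measure (closedBall (c b) (rr b)) :=
          ENNReal.tsum_le_tsum (fun b => hmeas b (hwt b.2))
      _ = f.measure (⋃ b ∈ w, closedBall (c b) (rr b)) :=
          (measure_biUnion hcount hdisj (fun i _ => measurableSet_closedBall)).symm
      _ ≤ f.measure (Ioc (a - Real.log 2) (a + Real.log 2 + u₀)) :=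
          measure_mono (iUnion₂_subset fun b hb => hsub b (hwt hb))
      _ = ENNReal.ofReal (f (a + Real.log 2 + u₀) - f (a - Real.log 2)) := f.measure_Ioc _ _
      _ ≤ ENNReal.ofReal D := ENNReal.ofReal_le_ofReal hD
  have hlam0 : 0 < lam := by nlinarith
  have h3 : ENNReal.ofReal (2 * lam * Real.log 2) ≤ ENNReal.ofReal (8 * D) := by
    calc ENNReal.ofReal (2 * lam * Real.log 2)
        = ENNReal.ofReal (2 * lam) * ENNReal.ofReal (Real.log 2) := by
          rw [← ENNReal.ofReal_mul (by positivity)]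
      _ ≤ ENNReal.ofReal (2 * lam) * (ENNReal.ofReal 8 * σ) := by
          exact mul_le_mul_right h1 _
      _ = ENNReal.ofReal 8 * (ENNReal.ofReal (2 * lam) * σ) := by ring
      _ ≤ ENNReal.ofReal 8 * ENNReal.ofReal D := mul_le_mul_right h2 _
      _ = ENNReal.ofReal (8 * D) := by rw [← ENNReal.ofReal_mul (by norm_num)]
  have h4 : 2 * lam * Real.log 2 ≤ 8 * D :=
    (ENNReal.ofReal_le_ofReal_iff (by linarith)).1 h3
  linarith

/-- Elementary exponential estimate: if `Q ≤ P e^x` with `0 ≤ x ≤ 1/2` then `Q - P ≤ 2xP`. -/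
private lemma exp_sub_bound {P Q x : ℝ} (hP : 0 ≤ P) (hQP : Q ≤ P * Real.exp x)
    (hx0 : 0 ≤ x) (hx : x ≤ 1/2) : Q - P ≤ P * (2*x) := by
  have h9 := Real.exp_bound_div_one_sub_of_interval hx0 (by linarith)
  have h10 : 1/(1 - x) ≤ 1 + 2*x := by
    rw [div_le_iff₀ (by linarith)]
    nlinarith
  nlinarith

/-- Elementary exponential estimate: if `P ≤ Q e^x` with `x, Q ≥ 0` then `P - Q ≤ xP`. -/
private lemma exp_sub_bound' {P Q x : ℝ} (hP : 0 ≤ P) (hQ : 0 ≤ Q)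
    (hPQ : P ≤ Q * Real.exp x) (hx0 : 0 ≤ x) : P - Q ≤ P * x := by
  have h1 : P * Real.exp (-x) ≤ Q := by
    rw [Real.exp_neg, mul_inv_le_iff₀ (Real.exp_pos _)]
    linarith
  have h2 : 1 - Real.exp (-x) ≤ x := by
    have := Real.add_one_le_exp (-x)
    linarith
  nlinarith

/-- Translation of the log-Lipschitz property of the counting function at a good point
into the regularity estimate. -/
private lemma kappa_bound (N : ℝ → ℕ) (dsq : ℝ) (hdsq : 1 ≤ dsq)
    (hmono : Monotone N) (hNpos : ∀ t : ℝ, 0 < t → (0:ℝ) < (N t : ℝ))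
    (s u₀ : ℝ) (hu₀def : u₀ = -Real.log (1 - 1/(100*dsq)))
    (hgood : ∀ u ∈ Ioc (0:ℝ) u₀,
      Real.log (N (Real.exp (s+u)) : ℝ) - Real.log (N (Real.exp s) : ℝ) ≤ 50*dsq*u ∧
      Real.log (N (Real.exp s) : ℝ) - Real.log (N (Real.exp (s-u)) : ℝ) ≤ 50*dsq*u)
    (κ : ℝ) (hκ : |κ| ≤ 1/(100*dsq)) :
    |(N ((1+κ)*Real.exp s) : ℝ) - (N (Real.exp s) : ℝ)| ≤
      100*dsq*|κ| * (N (Real.exp s) : ℝ) := by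
  have hdsq0 : (0:ℝ) < dsq := by linarith
  obtain ⟨ε, hε⟩ : ∃ x : ℝ, x = 1/(100*dsq) := ⟨_, rfl⟩
  rw [← hε] at hκ hu₀def
  have hε0 : 0 < ε := by rw [hε]; positivity
  have hε1 : ε ≤ 1/100 := by
    rw [hε, div_le_div_iff₀ (by positivity) (by norm_num)]
    nlinarith
  have h1ε : (0:ℝ) < 1 - ε := by linarith
  have hδ₁0 : (0:ℝ) < Real.exp s := Real.exp_pos s
  have hNδ₁ : (0:ℝ) < (N (Real.exp s) : ℝ) := hNpos _ hδ₁0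
  have h50ε : 50*dsq*ε = 1/2 := by
    rw [hε]
    field_simp
    ring
  rcases lt_trichotomy κ 0 with hκneg | hκ0 | hκpos
  · -- κ < 0
    have hκε : -κ ≤ ε := by rwa [abs_of_neg hκneg] at hκ
    have h1κ : (0:ℝ) < 1 + κ := by linarith
    have hu0 : 0 < -Real.log (1 + κ) := by
      have h6 : Real.log (1 + κ) < 0 := Real.log_neg h1κ (by linarith)
      linarith
    have huu₀ : -Real.log (1 + κ) ≤ u₀ := by
      rw [hu₀def]
      have h7 : Real.log (1 - ε) ≤ Real.log (1 + κ) := Real.log_le_log h1ε (by linarith)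
      linarith
    have hgu := (hgood _ ⟨hu0, huu₀⟩).2
    have hexp : Real.exp (s - -Real.log (1 + κ)) = (1 + κ) * Real.exp s := by
      rw [sub_neg_eq_add, Real.exp_add, Real.exp_log h1κ]
      ring
    rw [hexp] at hgu
    have hQ0 : (0:ℝ) < (N ((1+κ)*Real.exp s) : ℝ) := hNpos _ (by positivity)
    have hPQ : (N (Real.exp s) : ℝ) ≤
        (N ((1+κ)*Real.exp s) : ℝ) * Real.exp (50*dsq*(-Real.log (1+κ))) := by
      calc (N (Real.exp s) : ℝ) = Real.exp (Real.log (N (Real.exp s) : ℝ)) :=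
            (Real.exp_log hNδ₁).symm
        _ ≤ Real.exp (Real.log (N ((1+κ)*Real.exp s) : ℝ) + 50*dsq*(-Real.log (1+κ))) :=
            Real.exp_le_exp.2 (by linarith)
        _ = (N ((1+κ)*Real.exp s) : ℝ) * Real.exp (50*dsq*(-Real.log (1+κ))) := by
            rw [Real.exp_add, Real.exp_log hQ0]
    have hsub := exp_sub_bound' hNδ₁.le hQ0.le hPQ (by positivity)
    -- bound the exponent: `-log (1+κ) ≤ 2(-κ)`
    have h2y : Real.exp (-(2*(-κ))) ≤ 1 + κ := by
      have ha2 := Real.add_one_le_exp (2*(-κ))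
      rw [Real.exp_neg, inv_le_comm₀ (Real.exp_pos _) h1κ]
      have h8 : (0:ℝ) < 1 + 2*(-κ) := by linarith
      calc (1+κ)⁻¹ ≤ 1 + 2*(-κ) := by
            rw [inv_le_iff_one_le_mul₀ h1κ]
            nlinarith
        _ ≤ Real.exp (2*(-κ)) := by linarith
    have hlogy : -(2*(-κ)) ≤ Real.log (1 + κ) := by
      have h9 := Real.log_le_log (Real.exp_pos _) h2y
      rwa [Real.log_exp] at h9
    have huy : -Real.log (1+κ) ≤ 2*(-κ) := by linarith
    have hmon : (N ((1+κ)*Real.exp s) : ℝ) ≤ (N (Real.exp s) : ℝ) := by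
      exact_mod_cast hmono (by nlinarith : (1+κ)*Real.exp s ≤ Real.exp s)
    rw [abs_of_neg hκneg, abs_of_nonpos (by linarith)]
    have hfin : (N (Real.exp s) : ℝ) * (50*dsq*(-Real.log (1+κ))) ≤
        100*dsq*(-κ)*(N (Real.exp s) : ℝ) := by
      nlinarith [hNδ₁.le, hu0.le]
    linarith
  · -- κ = 0
    rw [hκ0]
    norm_num
  · -- κ > 0
    have hκε : κ ≤ ε := by rwa [abs_of_pos hκpos] at hκ
    have hu0 : 0 < Real.log (1 + κ) := Real.log_pos (by linarith)
    have huκ : Real.log (1 + κ) ≤ κ := by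
      have := Real.log_le_sub_one_of_pos (by linarith : (0:ℝ) < 1 + κ)
      linarith
    have huu₀ : Real.log (1 + κ) ≤ u₀ := by
      rw [hu₀def]
      have h6 : Real.log (1+κ) + Real.log (1-ε) ≤ 0 := by
        rw [← Real.log_mul (by positivity) h1ε.ne']
        apply Real.log_nonpos (by positivity)
        nlinarith
      linarith
    have hgu := (hgood _ ⟨hu0, huu₀⟩).1
    have hexp : Real.exp (s + Real.log (1 + κ)) = (1 + κ) * Real.exp s := by
      rw [Real.exp_add, Real.exp_log (by linarith : (0:ℝ) < 1 + κ)]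
      ring
    rw [hexp] at hgu
    have hQ0 : (0:ℝ) < (N ((1+κ)*Real.exp s) : ℝ) := hNpos _ (by positivity)
    have hQP : (N ((1+κ)*Real.exp s) : ℝ) ≤
        (N (Real.exp s) : ℝ) * Real.exp (50*dsq*Real.log (1+κ)) := by
      calc (N ((1+κ)*Real.exp s) : ℝ) = Real.exp (Real.log (N ((1+κ)*Real.exp s) : ℝ)) :=
            (Real.exp_log hQ0).symm
        _ ≤ Real.exp (Real.log (N (Real.exp s) : ℝ) + 50*dsq*Real.log (1+κ)) :=
            Real.exp_le_exp.2 (by linarith)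
        _ = (N (Real.exp s) : ℝ) * Real.exp (50*dsq*Real.log (1+κ)) := by
            rw [Real.exp_add, Real.exp_log hNδ₁]
    have hx1 : 50*dsq*Real.log (1+κ) ≤ 1/2 := by
      have h7 : 50*dsq*Real.log (1+κ) ≤ 50*dsq*ε := by
        nlinarith
      linarith
    have hsub := exp_sub_bound hNδ₁.le hQP (by positivity) hx1
    have hmon : (N (Real.exp s) : ℝ) ≤ (N ((1+κ)*Real.exp s) : ℝ) := by
      exact_mod_cast hmono (by nlinarith : Real.exp s ≤ (1+κ)*Real.exp s)
    rw [abs_of_pos hκpos, abs_of_nonneg (by linarith)]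
    have hfin : (N (Real.exp s) : ℝ) * (2*(50*dsq*Real.log (1+κ))) ≤
        100*dsq*κ*(N (Real.exp s) : ℝ) := by
      nlinarith [hNδ₁.le, hu0.le]
    linarith

/-- The regularity argument, abstracted over the counting function `N`. -/
private lemma regular_of_N (N : ℝ → ℕ) (d : ℕ) (hd : 0 < d) (δ : ℝ) (hδ : 0 < δ)
    (hmono : Monotone N) (hpos : ∀ t, 0 ≤ t → 1 ≤ N t)
    (hrc : ∀ t, 0 < t → ∃ η > 0, ∀ t' ∈ Ico t (t + η), N t' = N t)
    (hdbl : (N (2 * δ / (1 - 1 / (100 * (d:ℝ)^2))) : ℝ) ≤ 10 ^ (2*d^2) * (N (δ/2) : ℝ)) :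
    ∃ δ₁ : ℝ, δ ≤ δ₁ ∧ δ₁ ≤ 2 * δ ∧
      ∀ κ : ℝ, |κ| ≤ 1 / (100 * (d:ℝ)^2) →
        |(N ((1+κ)*δ₁) : ℝ) - (N δ₁ : ℝ)| ≤ 100 * (d:ℝ)^2 * |κ| * (N δ₁ : ℝ) := by
  have hd2 : (1:ℝ) ≤ (d:ℝ)^2 := by
    have h1 : (1:ℝ) ≤ (d:ℝ) := by exact_mod_cast hd
    nlinarith
  have hε0 : 0 < 1 / (100 * (d:ℝ)^2) := by positivity
  have hε1 : 1 / (100 * (d:ℝ)^2) ≤ 1/100 := by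
    rw [div_le_div_iff₀ (by positivity) (by norm_num)]
    nlinarith
  have h1ε : (0:ℝ) < 1 - 1 / (100 * (d:ℝ)^2) := by linarith
  obtain ⟨u₀, hu₀def⟩ : ∃ x : ℝ, x = -Real.log (1 - 1 / (100 * (d:ℝ)^2)) := ⟨_, rfl⟩
  have hu₀ : 0 < u₀ := by
    have h1 : Real.log (1 - 1 / (100 * (d:ℝ)^2)) < 0 := Real.log_neg h1ε (by linarith)
    rw [hu₀def]; linarith
  have hlog2 : (0:ℝ) < Real.log 2 := Real.log_pos (by norm_num)
  have hu₀' : u₀ ≤ Real.log 2 / 2 := by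
    have h2 : (0:ℝ) ≤ Real.log (2 * (1 - 1 / (100 * (d:ℝ)^2))^2) :=
      Real.log_nonneg (by nlinarith)
    rw [Real.log_mul (by norm_num) (by positivity), Real.log_pow] at h2
    push_cast at h2
    rw [hu₀def]; linarith
  have hNpos : ∀ t : ℝ, 0 < t → (0:ℝ) < (N t : ℝ) := by
    intro t ht
    exact_mod_cast hpos t ht.le
  -- the Stieltjes function `log N (exp s)`
  have hhmono : Monotone (fun s => Real.log (N (Real.exp s) : ℝ)) := by
    intro s s' hss'
    have h1 := hmono (Real.exp_le_exp.2 hss')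
    exact Real.log_le_log (hNpos _ (Real.exp_pos s)) (by exact_mod_cast h1)
  have hhrc : ∀ x : ℝ, ContinuousWithinAt (fun s => Real.log (N (Real.exp s) : ℝ)) (Ici x) x := by
    intro s
    obtain ⟨η, hη, hconst⟩ := hrc (Real.exp s) (Real.exp_pos s)
    have h1 : ∀ᶠ s' in 𝓝 s, Real.exp s' < Real.exp s + η :=
      (Real.continuous_exp.tendsto s).eventually_lt_const (by linarith)
    have hev : (fun s' => Real.log (N (Real.exp s') : ℝ)) =ᶠ[nhdsWithin s (Ici s)]
        (fun _ => Real.log (N (Real.exp s) : ℝ)) := by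
      filter_upwards [h1.filter_mono nhdsWithin_le_nhds, self_mem_nhdsWithin] with s' h1' h2'
      have h3 : N (Real.exp s') = N (Real.exp s) :=
        hconst _ ⟨Real.exp_le_exp.2 h2', h1'⟩
      rw [h3]
    exact continuousWithinAt_const.congr_of_eventuallyEq hev rfl
  have hDineq : Real.log (N (Real.exp (Real.log δ + Real.log 2 + u₀)) : ℝ) -
      Real.log (N (Real.exp (Real.log δ - Real.log 2)) : ℝ) ≤
      ((2*d^2 : ℕ) : ℝ) * Real.log 10 := by
    have e1 : Real.exp (Real.log δ - Real.log 2) = δ/2 := by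
      rw [Real.exp_sub, Real.exp_log hδ, Real.exp_log (by norm_num : (0:ℝ) < 2)]
    have e2 : Real.exp (Real.log δ + Real.log 2 + u₀) = 2 * δ / (1 - 1 / (100 * (d:ℝ)^2)) := by
      rw [Real.exp_add, Real.exp_add, Real.exp_log hδ,
        Real.exp_log (by norm_num : (0:ℝ) < 2), hu₀def, Real.exp_neg, Real.exp_log h1ε]
      field_simp
    rw [e1, e2]
    have hNr : (0:ℝ) < (N (δ/2) : ℝ) := hNpos _ (by positivity)
    have hNR : (0:ℝ) < (N (2 * δ / (1 - 1 / (100 * (d:ℝ)^2))) : ℝ) := hNpos _ (by positivity)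
    have h5 : Real.log (N (2 * δ / (1 - 1 / (100 * (d:ℝ)^2))) : ℝ) ≤
        Real.log ((10:ℝ) ^ (2*d^2) * (N (δ/2) : ℝ)) := Real.log_le_log hNR hdbl
    rw [Real.log_mul (by positivity) hNr.ne', Real.log_pow] at h5
    linarith
  have hcontr : 5 * (((2*d^2 : ℕ) : ℝ) * Real.log 10) < 50 * (d:ℝ)^2 * Real.log 2 := by
    have h32 : Real.log 10 < Real.log 32 := Real.log_lt_log (by norm_num) (by norm_num)
    have h25 : Real.log 32 = 5 * Real.log 2 := by
      rw [show (32:ℝ) = 2^5 by norm_num, Real.log_pow]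
      norm_num
    push_cast
    nlinarith [hlog2, hd2]
  obtain ⟨s, hs, hgood⟩ := exists_regular_point
    ⟨fun s => Real.log (N (Real.exp s) : ℝ), hhmono, hhrc⟩
    (Real.log δ) u₀ (50 * (d:ℝ)^2) (((2*d^2 : ℕ) : ℝ) * Real.log 10)
    hu₀ hu₀' hDineq hcontr
  refine ⟨Real.exp s, ?_, ?_, ?_⟩
  · rw [← Real.exp_log hδ]
    exact Real.exp_le_exp.2 hs.1
  · have e3 : Real.exp (Real.log δ + Real.log 2) = 2 * δ := by
      rw [Real.exp_add, Real.exp_log hδ, Real.exp_log (by norm_num : (0:ℝ) < 2)]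
      ring
    rw [← e3]
    exact Real.exp_le_exp.2 hs.2
  · intro κ hκ
    refine kappa_bound N ((d:ℝ)^2) hd2 hmono hNpos s u₀ ?_ ?_ κ ?_
    · rw [hu₀def]
    · exact fun u hu => hgood u hu
    · exact hκ

/-- Packing bound: an `r`-separated family in a ball of radius `R` in a finite-dimensional
real normed space has at most `((R + r/2)/(r/2))^dim` elements. -/
private lemma packing_bound {E : Type*} [NormedAddCommGroup E] [NormedSpace ℝ E]
    [FiniteDimensional ℝ E] {ι : Type*} (T : Finset ι) (x : ι → E) (c : E) (r R : ℝ)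
    (hr : 0 < r) (hR : 0 ≤ R) (hsep : ∀ a ∈ T, ∀ b ∈ T, a ≠ b → r < ‖x a - x b‖)
    (hin : ∀ a ∈ T, ‖x a - c‖ ≤ R) :
    (T.card : ℝ) * (r/2)^(Module.finrank ℝ E) ≤ (R + r/2)^(Module.finrank ℝ E) := by
  haveI : ProperSpace E := FiniteDimensional.proper ℝ E
  letI : MeasurableSpace E := borel E
  haveI : BorelSpace E := ⟨rfl⟩
  set μ : Measure E := (Module.Basis.ofVectorSpace ℝ E).addHaar with hμ
  set n : ℕ := Module.finrank ℝ E with hn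
  have hdisj : (T : Set ι).PairwiseDisjoint (fun t => closedBall (x t) (r/2)) := by
    intro a ha b hb hab
    apply closedBall_disjoint_closedBall
    rw [dist_eq_norm]
    have h6 := hsep a ha b hb hab
    linarith
  have hsub2 : ∀ t ∈ T, closedBall (x t) (r/2) ⊆ closedBall c (R + r/2) := by
    intro t ht
    apply closedBall_subset_closedBall'
    rw [dist_eq_norm]
    linarith [hin t ht]
  have hμball : μ (ball 0 1) ≠ 0 := (measure_ball_pos μ 0 one_pos).ne'
  have hμball' : μ (ball 0 1) ≠ ⊤ := measure_ball_lt_top.ne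
  have hsum : (T.card : ℝ≥0∞) * ENNReal.ofReal ((r/2)^n) * μ (ball 0 1) ≤
      ENNReal.ofReal ((R + r/2)^n) * μ (ball 0 1) := by
    calc (T.card : ℝ≥0∞) * ENNReal.ofReal ((r/2)^n) * μ (ball 0 1)
        = ∑ t ∈ T, μ (closedBall (x t) (r/2)) := by
          rw [Finset.sum_congr rfl
            (fun t _ => Measure.addHaar_closedBall μ _ (by positivity : (0:ℝ) ≤ r/2)),
            Finset.sum_const, nsmul_eq_mul, mul_assoc]
      _ = μ (⋃ t ∈ T, closedBall (x t) (r/2)) :=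
          (measure_biUnion_finset hdisj (fun t _ => measurableSet_closedBall)).symm
      _ ≤ μ (closedBall c (R + r/2)) := measure_mono (Set.iUnion₂_subset hsub2)
      _ = ENNReal.ofReal ((R + r/2)^n) * μ (ball 0 1) :=
          Measure.addHaar_closedBall μ _ (by positivity)
  have hcanc : (T.card : ℝ≥0∞) * ENNReal.ofReal ((r/2)^n) ≤ ENNReal.ofReal ((R + r/2)^n) :=
    (ENNReal.mul_le_mul_iff_left hμball hμball').1 hsum
  rw [← ENNReal.ofReal_natCast, ← ENNReal.ofReal_mul (by positivity)] at hcanc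
  exact (ENNReal.ofReal_le_ofReal_iff (by positivity)).1 hcanc

/-- Doubling property of Bohr sets via a packing argument. -/
private lemma bohr_doubling {G : Type*} [Group G] [Fintype G] {d : ℕ}
    (ρ : G →* unitary (𝕍 d)) {r R : ℝ} (hr : 0 < r) (hrR : r ≤ R) :
    (Nat.card {g : G // ‖(ρ g : 𝕍 d) - 1‖ ≤ R} : ℝ) ≤
      (2*R/r + 1) ^ (2*d^2) *
      (Nat.card {g : G // ‖(ρ g : 𝕍 d) - 1‖ ≤ r} : ℝ) := by
  classical
  have hR : 0 < R := lt_of_lt_of_le hr hrR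
  have hnorm : ∀ g k : G, ‖(ρ (g⁻¹ * k) : 𝕍 d) - 1‖ = ‖(ρ k : 𝕍 d) - (ρ g : 𝕍 d)‖ := by
    intro g k
    have h1 : (ρ g : 𝕍 d) * (ρ (g⁻¹ * k) : 𝕍 d) = (ρ k : 𝕍 d) := by
      rw [← MulMemClass.coe_mul, ← map_mul, mul_inv_cancel_left]
    calc ‖(ρ (g⁻¹*k) : 𝕍 d) - 1‖ = ‖(ρ g : 𝕍 d) * ((ρ (g⁻¹*k) : 𝕍 d) - 1)‖ :=
          (CStarRing.norm_mem_unitary_mul _ (ρ g).2).symm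
      _ = ‖(ρ k : 𝕍 d) - (ρ g : 𝕍 d)‖ := by rw [mul_sub, h1, mul_one]
  set BR : Finset G := Finset.univ.filter (fun g => ‖(ρ g : 𝕍 d) - 1‖ ≤ R) with hBR
  set 𝒯 : Finset (Finset G) := BR.powerset.filter
      (fun T => ∀ g ∈ T, ∀ k ∈ T, g ≠ k → r < ‖(ρ g : 𝕍 d) - (ρ k : 𝕍 d)‖) with h𝒯
  have hemp : ∅ ∈ 𝒯 := by simp [h𝒯]
  obtain ⟨T, hT𝒯, hTmax⟩ := Finset.exists_max_image 𝒯 Finset.card ⟨∅, hemp⟩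
  rw [h𝒯, Finset.mem_filter, Finset.mem_powerset] at hT𝒯
  obtain ⟨hTsub, hTsep⟩ := hT𝒯
  have hmax : ∀ g ∈ BR, ∃ t ∈ T, ‖(ρ g : 𝕍 d) - (ρ t : 𝕍 d)‖ ≤ r := by
    intro g hg
    by_contra hcon
    push_neg at hcon
    have hgT : g ∉ T := by
      intro hgT
      have := hcon g hgT
      rw [sub_self, norm_zero] at this
      exact absurd this (not_lt.2 hr.le)
    have hins : insert g T ∈ 𝒯 := by
      rw [h𝒯, Finset.mem_filter, Finset.mem_powerset]
      constructor
      · intro x hx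
        rcases Finset.mem_insert.1 hx with rfl | hx
        · exact hg
        · exact hTsub hx
      · intro x hx y hy hxy
        rcases Finset.mem_insert.1 hx with rfl | hx2
        · rcases Finset.mem_insert.1 hy with rfl | hy2
          · exact absurd rfl hxy
          · exact hcon y hy2
        · rcases Finset.mem_insert.1 hy with rfl | hy2
          · rw [norm_sub_rev]; exact hcon x hx2
          · exact hTsep x hx2 y hy2 hxy
    have h5 := hTmax _ hins
    rw [Finset.card_insert_of_notMem hgT] at h5
    omega
  choose! tfun htmem htdist using hmax
  have hcard1 : Nat.card {g : G // ‖(ρ g : 𝕍 d) - 1‖ ≤ R} ≤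
      T.card * Nat.card {g : G // ‖(ρ g : 𝕍 d) - 1‖ ≤ r} := by
    have hxBR : ∀ x : {g : G // ‖(ρ g : 𝕍 d) - 1‖ ≤ R}, (x : G) ∈ BR := by
      intro x
      rw [hBR, Finset.mem_filter]
      exact ⟨Finset.mem_univ _, x.2⟩
    let F : {g : G // ‖(ρ g : 𝕍 d) - 1‖ ≤ R} →
        {t // t ∈ T} × {g : G // ‖(ρ g : 𝕍 d) - 1‖ ≤ r} := fun x =>
      ⟨⟨tfun x, htmem x (hxBR x)⟩,
       ⟨(tfun x)⁻¹ * x, by rw [hnorm]; exact htdist x (hxBR x)⟩⟩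
    have hFinj : Function.Injective F := by
      intro x y hxy
      have h1 : tfun (x : G) = tfun (y : G) :=
        congrArg Subtype.val (congrArg Prod.fst hxy)
      have h2 : (tfun (x : G))⁻¹ * x = (tfun (y : G))⁻¹ * y :=
        congrArg Subtype.val (congrArg Prod.snd hxy)
      rw [h1] at h2
      exact Subtype.ext (mul_left_cancel h2)
    calc Nat.card {g : G // ‖(ρ g : 𝕍 d) - 1‖ ≤ R}
        ≤ Nat.card ({t // t ∈ T} × {g : G // ‖(ρ g : 𝕍 d) - 1‖ ≤ r}) :=
          Nat.card_le_card_of_injective F hFinj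
      _ = T.card * Nat.card {g : G // ‖(ρ g : 𝕍 d) - 1‖ ≤ r} := by
          rw [Nat.card_prod]
          congr 1
          rw [Nat.card_eq_fintype_card, Fintype.card_coe]
  have hTcard : (T.card : ℝ) ≤ (2*R/r + 1) ^ (2*d^2) := by
    have hfr : Module.finrank ℝ (𝕍 d) = 2*d^2 := by
      rw [finrank_real_of_complex]
      have h1 : Module.finrank ℂ (𝕍 d) = d * d := by
        rw [← (LinearMap.toContinuousLinearMap :
            (EuclideanSpace ℂ (Fin d) →ₗ[ℂ] EuclideanSpace ℂ (Fin d)) ≃ₗ[ℂ] _).finrank_eq,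
          Module.finrank_linearMap, finrank_euclideanSpace_fin]
      rw [h1]
      ring
    have hpack := packing_bound T (fun g => (ρ g : 𝕍 d)) (1 : 𝕍 d) r R hr hR.le
      (fun a ha b hb hab => hTsep a ha b hb hab)
      (fun a ha => by
        have htBR := hTsub ha
        rw [hBR, Finset.mem_filter] at htBR
        exact htBR.2)
    rw [hfr] at hpack
    have h2 : (T.card : ℝ) ≤ ((R + r/2)/(r/2))^(2*d^2) := by
      rw [div_pow, le_div_iff₀ (by positivity)]
      exact hpack
    have h3 : ((R + r/2)/(r/2)) = 2*R/r + 1 := by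
      field_simp
    rw [h3] at h2
    exact h2
  calc (Nat.card {g : G // ‖(ρ g : 𝕍 d) - 1‖ ≤ R} : ℝ)
      ≤ (T.card : ℝ) * (Nat.card {g : G // ‖(ρ g : 𝕍 d) - 1‖ ≤ r} : ℝ) := by
        exact_mod_cast hcard1
    _ ≤ (2*R/r + 1) ^ (2*d^2) * (Nat.card {g : G // ‖(ρ g : 𝕍 d) - 1‖ ≤ r} : ℝ) :=
        mul_le_mul_of_nonneg_right hTcard (by positivity)

end BohrAux

/-- for any `δ ∈ (0,1/2]` and any unitary representation `ρ` of a finite group,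
there is `δ₁ ∈ [δ,2δ]` such that the Bohr set `Bohr(ρ,δ₁) = {g : ‖ρ(g) − I‖_op ≤ δ₁}` is
regular: `| |Bohr(ρ,(1+κ)δ₁)| − |Bohr(ρ,δ₁)| | ≤ 100 d_ρ² |κ| · |Bohr(ρ,δ₁)|` whenever
`|κ| ≤ 1/(100 d_ρ²)`. -/
theorem stmt18 {G : Type*} [Group G] [Fintype G] (d : ℕ)
    (ρ : G →* unitary (EuclideanSpace ℂ (Fin d) →L[ℂ] EuclideanSpace ℂ (Fin d)))
    (δ : ℝ) (hδ : 0 < δ) (hδ2 : δ ≤ 1 / 2) :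
    ∃ δ₁ : ℝ, δ ≤ δ₁ ∧ δ₁ ≤ 2 * δ ∧
      ∀ κ : ℝ, |κ| ≤ 1 / (100 * (d : ℝ) ^ 2) →
        |(Nat.card {g : G //
            ‖(ρ g : EuclideanSpace ℂ (Fin d) →L[ℂ] EuclideanSpace ℂ (Fin d)) - 1‖ ≤
              (1 + κ) * δ₁} : ℝ) -
          (Nat.card {g : G //
            ‖(ρ g : EuclideanSpace ℂ (Fin d) →L[ℂ] EuclideanSpace ℂ (Fin d)) - 1‖ ≤ δ₁} : ℝ)| ≤
        100 * (d : ℝ) ^ 2 * |κ| *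
          (Nat.card {g : G //
            ‖(ρ g : EuclideanSpace ℂ (Fin d) →L[ℂ] EuclideanSpace ℂ (Fin d)) - 1‖ ≤ δ₁} : ℝ) := by
  classical
  rcases Nat.eq_zero_or_pos d with hd0 | hd
  · refine ⟨δ, le_refl δ, by linarith, ?_⟩
    intro κ hκ
    have hκ0 : κ = 0 := by
      subst hd0
      norm_num at hκ
      exact abs_eq_zero.1 (le_antisymm (by simpa using hκ) (abs_nonneg κ))
    rw [hκ0]
    norm_num
  · set N : ℝ → ℕ := fun t =>
      Nat.card {g : G //
        ‖(ρ g : EuclideanSpace ℂ (Fin d) →L[ℂ] EuclideanSpace ℂ (Fin d)) - 1‖ ≤ t} with hN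
    have hNle : ∀ t₁ t₂ : ℝ,
        (∀ g : G, ‖(ρ g : EuclideanSpace ℂ (Fin d) →L[ℂ] EuclideanSpace ℂ (Fin d)) - 1‖ ≤ t₁ →
          ‖(ρ g : EuclideanSpace ℂ (Fin d) →L[ℂ] EuclideanSpace ℂ (Fin d)) - 1‖ ≤ t₂) →
        N t₁ ≤ N t₂ := by
      intro t₁ t₂ himp
      exact Nat.card_le_card_of_injective (fun x => ⟨x.1, himp x.1 x.2⟩)
        (fun a b hab => Subtype.ext (Subtype.mk_eq_mk.1 hab))
    have hmono : Monotone N := fun t₁ t₂ h => hNle t₁ t₂ (fun g hg => le_trans hg h)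
    have hpos : ∀ t, 0 ≤ t → 1 ≤ N t := by
      intro t ht
      haveI : Nonempty {g : G //
          ‖(ρ g : EuclideanSpace ℂ (Fin d) →L[ℂ] EuclideanSpace ℂ (Fin d)) - 1‖ ≤ t} :=
        ⟨⟨1, by rw [map_one, OneMemClass.coe_one, sub_self, norm_zero]; exact ht⟩⟩
      exact Nat.card_pos
    have hrc : ∀ t : ℝ, 0 < t → ∃ η > 0, ∀ t' ∈ Ico t (t + η), N t' = N t := by
      intro t ht
      set S : Finset ℝ := Finset.univ.image
        (fun g : G => ‖(ρ g : EuclideanSpace ℂ (Fin d) →L[ℂ] EuclideanSpace ℂ (Fin d)) - 1‖)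
        with hS
      set A : Finset ℝ := S.filter (fun x => t < x) with hA
      rcases A.eq_empty_or_nonempty with hAe | hAne
      · refine ⟨1, one_pos, fun t' ht' => le_antisymm ?_ (hmono ht'.1)⟩
        apply hNle
        intro g hg
        by_contra hgt
        push_neg at hgt
        have hmemA : ‖(ρ g : EuclideanSpace ℂ (Fin d) →L[ℂ] EuclideanSpace ℂ (Fin d)) - 1‖ ∈ A := by
          rw [hA, Finset.mem_filter]
          exact ⟨by rw [hS]; exact Finset.mem_image_of_mem _ (Finset.mem_univ g), hgt⟩
        rw [hAe] at hmemA
        exact absurd hmemA (Finset.notMem_empty _)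
      · set m : ℝ := A.min' hAne with hm
        have htm : t < m := (Finset.mem_filter.1 (A.min'_mem hAne)).2
        refine ⟨m - t, by linarith, fun t' ht' => le_antisymm ?_ (hmono ht'.1)⟩
        apply hNle
        intro g hg
        by_contra hgt
        push_neg at hgt
        have hmemA : ‖(ρ g : EuclideanSpace ℂ (Fin d) →L[ℂ] EuclideanSpace ℂ (Fin d)) - 1‖ ∈ A := by
          rw [hA, Finset.mem_filter]
          exact ⟨by rw [hS]; exact Finset.mem_image_of_mem _ (Finset.mem_univ g), hgt⟩
        have h7 := A.min'_le _ hmemA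
        have h8 := ht'.2
        rw [← hm] at h7
        linarith [le_trans h7 hg]
      -- end hrc
    have hd2 : (1:ℝ) ≤ (d:ℝ)^2 := by
      have h1 : (1:ℝ) ≤ (d:ℝ) := by exact_mod_cast hd
      nlinarith
    have hε1 : 1 / (100 * (d:ℝ)^2) ≤ 1/100 := by
      rw [div_le_div_iff₀ (by positivity) (by norm_num)]
      nlinarith
    have hε0 : 0 < 1 / (100 * (d:ℝ)^2) := by positivity
    have h1ε : (0:ℝ) < 1 - 1 / (100 * (d:ℝ)^2) := by linarith
    have hdbl : (N (2 * δ / (1 - 1 / (100 * (d:ℝ)^2))) : ℝ) ≤ 10 ^ (2*d^2) * (N (δ/2) : ℝ) := by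
      have hrpos : (0:ℝ) < δ/2 := by linarith
      have hrR : δ/2 ≤ 2 * δ / (1 - 1 / (100 * (d:ℝ)^2)) := by
        rw [le_div_iff₀ h1ε]
        nlinarith
      have hbd := bohr_doubling ρ hrpos hrR
      have hb1 : 2 * δ / (1 - 1 / (100 * (d:ℝ)^2)) ≤ 9*δ/4 := by
        rw [div_le_iff₀ h1ε]
        nlinarith
      have hbase : 2*(2 * δ / (1 - 1 / (100 * (d:ℝ)^2)))/(δ/2) + 1 ≤ 10 := by
        have h9 : 2*(2 * δ / (1 - 1 / (100 * (d:ℝ)^2)))/(δ/2) ≤ 9 := by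
          rw [div_le_iff₀ hrpos]
          linarith
        linarith
      calc (N (2 * δ / (1 - 1 / (100 * (d:ℝ)^2))) : ℝ)
          ≤ (2*(2 * δ / (1 - 1 / (100 * (d:ℝ)^2)))/(δ/2) + 1) ^ (2*d^2) * (N (δ/2) : ℝ) := hbd
        _ ≤ 10 ^ (2*d^2) * (N (δ/2) : ℝ) := by
            apply mul_le_mul_of_nonneg_right _ (by positivity)
            apply pow_le_pow_left₀ (by positivity) hbase
    obtain ⟨δ₁, h1, h2, h3⟩ := regular_of_N N d hd δ hδ hmono hpos hrc hdbl
    exact ⟨δ₁, h1, h2, h3⟩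
end
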